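/- Let $H(x) = -x\log_2 x - (1-x)\log_2(1-x)$ and $g(x) = \log_2(27/4) \cdot 11 \cdot x + H(3x) - 10 H(x)$ (the case $k = 10$). Then $g(0.221) < 0$; consequently the unique zero $\alpha_2(10)$ of $g$ in $(0,1/3)$ satisfies $\alpha_2(10) > 0.221$. -/

import Mathlib

open Real

/-- The binary entropy function. -/
noncomputable def binEnt (x : ℝ) : ℝ :=
  -x * Real.logb 2 x - (1 - x) * Real.logb 2 (1 - x)

/-- `g x = log₂(27/4)(k+1)x + H(3x) - kH(x)` for `k = 10`. -/
noncomputable def g10 (x : ℝ) : ℝ :=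
  Real.logb 2 (27 / 4) * 11 * x + binEnt (3 * x) - 10 * binEnt x

/- ### Auxiliary lemmas -/

lemma ln_lt_of_pow (p h q : ℕ) (hp : 0 < p) (hb : p ^ q < 2 ^ h) :
    (q : ℝ) * Real.log p < h * Real.log 2 := by
  have : Real.log ((p : ℝ) ^ q) < Real.log ((2 : ℝ) ^ h) := by
    apply Real.log_lt_log (by positivity)
    exact_mod_cast hb
  rwa [Real.log_pow, Real.log_pow] at this

lemma ln_gt_of_pow (p h q : ℕ) (hb : 2 ^ h < p ^ q) :
    (h : ℝ) * Real.log 2 < q * Real.log p := by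
  have : Real.log ((2 : ℝ) ^ h) < Real.log ((p : ℝ) ^ q) := by
    apply Real.log_lt_log (by positivity)
    exact_mod_cast hb
  rwa [Real.log_pow, Real.log_pow] at this

lemma binEnt_eq (x : ℝ) :
    binEnt x = (-(x * Real.log x) - (1 - x) * Real.log (1 - x)) / Real.log 2 := by
  unfold binEnt
  rw [Real.logb, Real.logb]
  ring

lemma binEnt_continuous : Continuous binEnt := by
  have h : binEnt = fun x => (-(x * Real.log x) - (1 - x) * Real.log (1 - x)) / Real.log 2 := by
    funext x; exact binEnt_eq x
  rw [h]
  exact ((Real.continuous_mul_log.neg.sub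
    (Real.continuous_mul_log.comp (continuous_const.sub continuous_id))).div_const _)

lemma g10_continuous : Continuous g10 := by
  unfold g10
  exact ((continuous_const.mul continuous_id).add
    (binEnt_continuous.comp (continuous_const.mul continuous_id))).sub
    (continuous_const.mul binEnt_continuous)

lemma binEnt_hasDerivAt {x : ℝ} (h0 : x ≠ 0) (h1 : x ≠ 1) :
    HasDerivAt binEnt ((Real.log (1 - x) - Real.log x) / Real.log 2) x := by
  have hf : binEnt = fun y => (-(y * Real.log y) - (1 - y) * Real.log (1 - y)) / Real.log 2 := by
    funext y; exact binEnt_eq y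
  have ha : HasDerivAt (fun y : ℝ => y * Real.log y) (Real.log x + 1) x :=
    Real.hasDerivAt_mul_log h0
  have hne : (1 : ℝ) - x ≠ 0 := by
    intro h
    exact h1 (sub_eq_zero.mp h).symm
  have hb : HasDerivAt (fun y : ℝ => (1 - y) * Real.log (1 - y))
      ((Real.log (1 - x) + 1) * (-1)) x := by
    have hc : HasDerivAt (fun y : ℝ => 1 - y) (-1 : ℝ) x := by
      simpa using (hasDerivAt_id x).const_sub 1
    exact (Real.hasDerivAt_mul_log (x := 1 - x) hne).comp x hc
  rw [hf]
  have hd := ((ha.neg).sub hb).div_const (Real.log 2)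
  refine hd.congr_deriv ?_
  ring

lemma hasDerivAt_g10 {x : ℝ} (h0 : 0 < x) (h1 : x < 1/3) :
    HasDerivAt g10
      (Real.logb 2 (27 / 4) * 11 +
        ((Real.log (1 - 3 * x) - Real.log (3 * x)) / Real.log 2) * 3 -
        10 * ((Real.log (1 - x) - Real.log x) / Real.log 2)) x := by
  have hlin : HasDerivAt (fun y : ℝ => Real.logb 2 (27 / 4) * 11 * y)
      (Real.logb 2 (27 / 4) * 11) x := by
    simpa using (hasDerivAt_id x).const_mul (Real.logb 2 (27 / 4) * 11)
  have h3 : HasDerivAt (fun y : ℝ => 3 * y) (3 : ℝ) x := by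
    simpa using (hasDerivAt_id x).const_mul (3 : ℝ)
  have hb3 : HasDerivAt (fun y : ℝ => binEnt (3 * y))
      (((Real.log (1 - 3 * x) - Real.log (3 * x)) / Real.log 2) * 3) x :=
    (binEnt_hasDerivAt (by positivity) (by nlinarith)).comp x h3
  have hbx : HasDerivAt binEnt ((Real.log (1 - x) - Real.log x) / Real.log 2) x :=
    binEnt_hasDerivAt (ne_of_gt h0) (by nlinarith)
  have := (hlin.add hb3).sub (hbx.const_mul 10)
  exact this

/-- The first derivative of `g10` (valid on `(0,1/3)`). -/
noncomputable def gd1 (x : ℝ) : ℝ :=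
  Real.logb 2 (27 / 4) * 11 +
    ((Real.log (1 - 3 * x) - Real.log (3 * x)) / Real.log 2) * 3 -
    10 * ((Real.log (1 - x) - Real.log x) / Real.log 2)

lemma hasDerivAt_gd1 {x : ℝ} (h0 : 0 < x) (h1 : x < 1/3) :
    HasDerivAt gd1
      ((((1 - 3 * x)⁻¹ * (-3) - (3 * x)⁻¹ * 3) / Real.log 2) * 3 -
        10 * (((1 - x)⁻¹ * (-1) - x⁻¹) / Real.log 2)) x := by
  have h3 : HasDerivAt (fun y : ℝ => 3 * y) (3 : ℝ) x := by
    simpa using (hasDerivAt_id x).const_mul (3 : ℝ)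
  have hm3 : HasDerivAt (fun y : ℝ => 1 - 3 * y) (-3 : ℝ) x := by
    simpa using h3.const_sub 1
  have hm1 : HasDerivAt (fun y : ℝ => 1 - y) (-1 : ℝ) x := by
    simpa using (hasDerivAt_id x).const_sub 1
  have hne3 : (1 : ℝ) - 3 * x ≠ 0 := by intro h; nlinarith [sub_eq_zero.mp h]
  have hne1 : (1 : ℝ) - x ≠ 0 := by intro h; nlinarith [sub_eq_zero.mp h]
  have hl1 : HasDerivAt (fun y : ℝ => Real.log (1 - 3 * y)) ((1 - 3 * x)⁻¹ * (-3)) x :=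
    (Real.hasDerivAt_log hne3).comp (h₂ := Real.log) x hm3
  have hl2 : HasDerivAt (fun y : ℝ => Real.log (3 * y)) ((3 * x)⁻¹ * 3) x :=
    (Real.hasDerivAt_log (by positivity)).comp x h3
  have hl3 : HasDerivAt (fun y : ℝ => Real.log (1 - y)) ((1 - x)⁻¹ * (-1)) x :=
    (Real.hasDerivAt_log hne1).comp x hm1
  have hl4 : HasDerivAt (fun y : ℝ => Real.log y) (x⁻¹) x :=
    Real.hasDerivAt_log (ne_of_gt h0)
  have := ((hasDerivAt_const x (Real.logb 2 (27 / 4) * 11)).add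
    ((((hl1.sub hl2).div_const (Real.log 2)).mul_const 3))).sub
    ((((hl3.sub hl4).div_const (Real.log 2)).const_mul 10))
  exact this.congr_deriv (by ring)

/- ### Numerical bounds -/

lemma log2_pos : (0 : ℝ) < Real.log 2 := Real.log_pos one_lt_two

lemma g10_neg : g10 0.221 < 0 := by
  have l2 := log2_pos
  have h3 : (15601 : ℝ) * Real.log 3 < 24727 * Real.log 2 := by
    have := ln_lt_of_pow 3 24727 15601 (by norm_num) (by decide +kernel)
    exact_mod_cast this
  have h13 : (5458 : ℝ) * Real.log 13 < 20197 * Real.log 2 := by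
    have := ln_lt_of_pow 13 20197 5458 (by norm_num) (by decide +kernel)
    exact_mod_cast this
  have h17 : (343 : ℝ) * Real.log 17 < 1402 * Real.log 2 := by
    have := ln_lt_of_pow 17 1402 343 (by norm_num) (by decide +kernel)
    exact_mod_cast this
  have h337 : (163717 : ℝ) * Real.log 2 < 19498 * Real.log 337 := by
    have := ln_gt_of_pow 337 163717 19498 (by decide +kernel)
    exact_mod_cast this
  have h19 : (1327 : ℝ) * Real.log 19 < 5637 * Real.log 2 := by
    have := ln_lt_of_pow 19 5637 1327 (by norm_num) (by decide +kernel)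
    exact_mod_cast this
  have h41 : (3317 : ℝ) * Real.log 41 < 17771 * Real.log 2 := by
    have := ln_lt_of_pow 41 17771 3317 (by norm_num) (by decide +kernel)
    exact_mod_cast this
  have h5 : (29384 : ℝ) * Real.log 2 < 12655 * Real.log 5 := by
    have := ln_gt_of_pow 5 29384 12655 (by decide +kernel)
    exact_mod_cast this
  have e663 : Real.log ((663 : ℝ) / 1000) =
      Real.log 3 + Real.log 13 + Real.log 17 - 3 * Real.log 2 - 3 * Real.log 5 := by
    rw [show ((663 : ℝ) / 1000) = 3 * 13 * 17 / (2 ^ 3 * 5 ^ 3) by norm_num,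
      Real.log_div (by norm_num) (by norm_num), Real.log_mul (by norm_num) (by norm_num),
      Real.log_mul (by norm_num) (by norm_num), Real.log_mul (by norm_num) (by norm_num),
      Real.log_pow, Real.log_pow]
    push_cast; ring
  have e337 : Real.log ((337 : ℝ) / 1000) =
      Real.log 337 - 3 * Real.log 2 - 3 * Real.log 5 := by
    rw [show ((337 : ℝ) / 1000) = 337 / (2 ^ 3 * 5 ^ 3) by norm_num,
      Real.log_div (by norm_num) (by norm_num), Real.log_mul (by norm_num) (by norm_num),
      Real.log_pow, Real.log_pow]
    push_cast; ring
  have e221 : Real.log ((221 : ℝ) / 1000) =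
      Real.log 13 + Real.log 17 - 3 * Real.log 2 - 3 * Real.log 5 := by
    rw [show ((221 : ℝ) / 1000) = 13 * 17 / (2 ^ 3 * 5 ^ 3) by norm_num,
      Real.log_div (by norm_num) (by norm_num), Real.log_mul (by norm_num) (by norm_num),
      Real.log_mul (by norm_num) (by norm_num), Real.log_pow, Real.log_pow]
    push_cast; ring
  have e779 : Real.log ((779 : ℝ) / 1000) =
      Real.log 19 + Real.log 41 - 3 * Real.log 2 - 3 * Real.log 5 := by
    rw [show ((779 : ℝ) / 1000) = 19 * 41 / (2 ^ 3 * 5 ^ 3) by norm_num,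
      Real.log_div (by norm_num) (by norm_num), Real.log_mul (by norm_num) (by norm_num),
      Real.log_mul (by norm_num) (by norm_num), Real.log_pow, Real.log_pow]
    push_cast; ring
  have e274 : Real.log ((27 : ℝ) / 4) = 3 * Real.log 3 - 2 * Real.log 2 := by
    rw [show ((27 : ℝ) / 4) = 3 ^ 3 / 2 ^ 2 by norm_num,
      Real.log_div (by norm_num) (by norm_num), Real.log_pow, Real.log_pow]
    push_cast; ring
  have key : 6630 * Real.log 3 + 1547 * Real.log 13 + 1547 * Real.log 17 -
      337 * Real.log 337 + 7790 * Real.log 19 + 7790 * Real.log 41 -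
      31862 * Real.log 2 - 27000 * Real.log 5 < 0 := by
    nlinarith [h3, h13, h17, h337, h19, h41, h5, l2]
  have hexp : g10 0.221 =
      (6630 * Real.log 3 + 1547 * Real.log 13 + 1547 * Real.log 17 -
        337 * Real.log 337 + 7790 * Real.log 19 + 7790 * Real.log 41 -
        31862 * Real.log 2 - 27000 * Real.log 5) / (1000 * Real.log 2) := by
    unfold g10
    rw [binEnt_eq, binEnt_eq, Real.logb,
      show (3 : ℝ) * 0.221 = 663 / 1000 by norm_num,
      show (1 : ℝ) - 663 / 1000 = 337 / 1000 by norm_num,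
      show (1 : ℝ) - (0.221 : ℝ) = 779 / 1000 by norm_num,
      show (0.221 : ℝ) = 221 / 1000 by norm_num,
      e663, e337, e221, e779, e274]
    field_simp
    ring
  rw [hexp]
  exact div_neg_of_neg_of_pos key (by positivity)

/- ### Convexity on [0, 0.221] -/

lemma g10_zero : g10 0 = 0 := by
  norm_num [g10, binEnt, Real.logb]

lemma g10_convex : ConvexOn ℝ (Set.Icc (0 : ℝ) 0.221) g10 := by
  have hint : interior (Set.Icc (0 : ℝ) 0.221) = Set.Ioo 0 0.221 := interior_Icc
  have hmem : ∀ x ∈ Set.Ioo (0 : ℝ) 0.221, 0 < x ∧ x < 1/3 := by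
    intro x hx
    exact ⟨hx.1, by have := hx.2; norm_num at this ⊢; linarith⟩
  have hev : ∀ x ∈ Set.Ioo (0 : ℝ) 0.221, deriv g10 =ᶠ[nhds x] gd1 := by
    intro x hx
    filter_upwards [Ioo_mem_nhds hx.1 hx.2] with y hy
    obtain ⟨hy0, hy3⟩ := hmem y hy
    exact (hasDerivAt_g10 hy0 hy3).deriv
  apply convexOn_of_deriv2_nonneg (convex_Icc _ _) g10_continuous.continuousOn
  · rw [hint]
    intro x hx
    obtain ⟨h0, h1⟩ := hmem x hx
    exact (hasDerivAt_g10 h0 h1).differentiableAt.differentiableWithinAt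
  · rw [hint]
    intro x hx
    obtain ⟨h0, h1⟩ := hmem x hx
    have := (hasDerivAt_gd1 h0 h1).differentiableAt
    exact (((hev x hx).differentiableAt_iff).mpr this).differentiableWithinAt
  · rw [hint]
    intro x hx
    obtain ⟨h0, h1⟩ := hmem x hx
    show 0 ≤ deriv (deriv g10) x
    rw [(hev x hx).deriv_eq, (hasDerivAt_gd1 h0 h1).deriv]
    have hx1 : (0 : ℝ) < 1 - x := by linarith
    have hx3 : (0 : ℝ) < 1 - 3 * x := by linarith
    have heq : (((1 - 3 * x)⁻¹ * (-3) - (3 * x)⁻¹ * 3) / Real.log 2) * 3 -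
        10 * (((1 - x)⁻¹ * (-1) - x⁻¹) / Real.log 2) =
        (7 - 27 * x) / (x * (1 - x) * (1 - 3 * x) * Real.log 2) := by
      field_simp
      ring
    rw [heq]
    have h7 : (0 : ℝ) ≤ 7 - 27 * x := by
      have := hx.2; norm_num at this; linarith
    positivity

theorem alpha2_ten_gt : g10 0.221 < 0 ∧
    ∀ α : ℝ, α ∈ Set.Ioo (0 : ℝ) (1 / 3) → g10 α = 0 → 0.221 < α := by
  refine ⟨g10_neg, ?_⟩
  rintro α ⟨hα0, hα3⟩ hz
  by_contra h
  push_neg at h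
  rcases eq_or_lt_of_le h with heq | hlt
  · rw [heq] at hz
    exact absurd hz (ne_of_lt g10_neg)
  · set t : ℝ := α / 0.221 with ht
    have ht0 : 0 < t := by positivity
    have ht1 : t < 1 := by rw [ht]; rw [div_lt_one (by norm_num)]; exact hlt
    have hc := g10_convex.2 (Set.left_mem_Icc.mpr (by norm_num))
      (Set.right_mem_Icc.mpr (by norm_num)) (by linarith : (0:ℝ) ≤ 1 - t)
      (le_of_lt ht0) (by ring)
    have hcomb : (1 - t) • (0 : ℝ) + t • (0.221 : ℝ) = α := by
      simp [smul_eq_mul, ht]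
      field_simp
    rw [hcomb, g10_zero, hz] at hc
    simp only [smul_eq_mul, mul_zero, zero_add] at hc
    nlinarith [g10_neg, ht0, hc]
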